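/- Let m ≥ 3 and let x_1, ..., x_m be real numbers with 0 ≤ x_i ≤ 1 and ∑_{i=1}^m x_i = m - 1. Then ∑_{i=1}^m arccos(x_i x_{i+1}) ≥ π, where indices are taken modulo m (so x_{m+1} = x_1). -/

import Mathlib

open Real Set Finset

lemma arccos_concaveOn : ConcaveOn ℝ (Set.Icc (0:ℝ) 1) Real.arccos := by
  apply AntitoneOn.concaveOn_of_deriv (convex_Icc 0 1) Real.continuous_arccos.continuousOn
  · rw [interior_Icc]
    intro y hy
    exact (Real.differentiableAt_arccos.mpr
      ⟨by nlinarith [hy.1, hy.2], ne_of_lt hy.2⟩).differentiableWithinAt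
  · rw [interior_Icc, Real.deriv_arccos]
    intro a ha b hb hab
    have h2 : 0 < Real.sqrt (1 - b^2) := Real.sqrt_pos.mpr (by nlinarith [hb.1, hb.2])
    have h1 : Real.sqrt (1 - b^2) ≤ Real.sqrt (1 - a^2) := by
      apply Real.sqrt_le_sqrt; nlinarith [ha.1, hb.1]
    have := one_div_le_one_div_of_le h2 h1
    simp only
    linarith

lemma concave_edge {b1 s1 b2 s2 : ℝ} {I : Set ℝ} (hI : Convex ℝ I)
    (hs : s1 = 0 ∨ s2 = 0)
    (h1 : ∀ t ∈ I, b1 + s1 * t ∈ Set.Icc (0:ℝ) 1)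
    (h2 : ∀ t ∈ I, b2 + s2 * t ∈ Set.Icc (0:ℝ) 1) :
    ConcaveOn ℝ I (fun t => Real.arccos ((b1 + s1 * t) * (b2 + s2 * t))) := by
  constructor
  · exact hI
  · intro p hp q hq α β hα hβ hαβ
    have hP : (b1 + s1 * p) * (b2 + s2 * p) ∈ Set.Icc (0:ℝ) 1 := by
      obtain ⟨a1, a2⟩ := h1 p hp; obtain ⟨c1, c2⟩ := h2 p hp
      exact ⟨mul_nonneg a1 c1, mul_le_one₀ a2 c1 c2⟩
    have hQ : (b1 + s1 * q) * (b2 + s2 * q) ∈ Set.Icc (0:ℝ) 1 := by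
      obtain ⟨a1, a2⟩ := h1 q hq; obtain ⟨c1, c2⟩ := h2 q hq
      exact ⟨mul_nonneg a1 c1, mul_le_one₀ a2 c1 c2⟩
    have key : (b1 + s1 * (α • p + β • q)) * (b2 + s2 * (α • p + β • q))
        = α • ((b1 + s1 * p) * (b2 + s2 * p)) + β • ((b1 + s1 * q) * (b2 + s2 * q)) := by
      simp only [smul_eq_mul]
      rcases hs with h | h <;> subst h <;> linear_combination (-(b1 * b2)) * hαβ
    have := arccos_concaveOn.2 hP hQ hα hβ hαβ
    simpa only [key] using this

lemma concave_min_le {f : ℝ → ℝ} {p q : ℝ} (hp : p ≤ 0) (hq : 0 ≤ q)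
    (hf : ConcaveOn ℝ (Set.Icc p q) f) : min (f p) (f q) ≤ f 0 := by
  rcases eq_or_lt_of_le (hp.trans hq) with h | h
  · have hp0 : p = 0 := by linarith
    have hq0 : q = 0 := by linarith
    simp [hp0, hq0]
  · set α := q / (q - p) with hα
    set β := -p / (q - p) with hβ
    have hqp : 0 < q - p := by linarith
    have hα0 : 0 ≤ α := div_nonneg hq hqp.le
    have hβ0 : 0 ≤ β := div_nonneg (by linarith) hqp.le
    have hαβ : α + β = 1 := by
      rw [hα, hβ, ← add_div, show q + -p = q - p by ring]
      exact div_self hqp.ne'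
    have h0 : α • p + β • q = 0 := by
      simp only [smul_eq_mul, hα, hβ]; field_simp; ring
    have := hf.2 (Set.left_mem_Icc.mpr (hp.trans hq)) (Set.right_mem_Icc.mpr (hp.trans hq))
      hα0 hβ0 hαβ
    rw [h0] at this
    calc min (f p) (f q) = α • min (f p) (f q) + β • min (f p) (f q) := by
          simp only [smul_eq_mul]; rw [← add_mul, hαβ, one_mul]
      _ ≤ α • f p + β • f q := by
          simp only [smul_eq_mul]
          gcongr <;> [exact min_le_left _ _; exact min_le_right _ _]
      _ ≤ f 0 := this

lemma concaveOn_finset_sum {ι : Type*} (s : Finset ι) {I : Set ℝ} (hI : Convex ℝ I)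
    (f : ι → ℝ → ℝ) (h : ∀ e ∈ s, ConcaveOn ℝ I (f e)) :
    ConcaveOn ℝ I (fun t => ∑ e ∈ s, f e t) := by
  classical
  induction s using Finset.cons_induction with
  | empty => simpa using concaveOn_const (0:ℝ) hI
  | cons a s ha ih =>
    simp only [Finset.sum_cons]
    exact (h a (Finset.mem_cons_self a s)).add
      (ih fun e he => h e (Finset.mem_cons_of_mem he))

lemma quad_nonneg {A B C u u1 u2 : ℝ} (hA : A ≤ 0) (h1 : 0 ≤ A*u1^2+B*u1+C)
    (h2 : 0 ≤ A*u2^2+B*u2+C) (hu1 : u1 ≤ u) (hu2 : u ≤ u2) :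
    0 ≤ A*u^2+B*u+C := by
  rcases eq_or_lt_of_le (hu1.trans hu2) with heq | hlt
  · have h' : u = u1 := le_antisymm (heq ▸ hu2) hu1
    rw [h']; exact h1
  · have t1 := mul_nonneg h1 (sub_nonneg.2 hu2)
    have t2 := mul_nonneg h2 (sub_nonneg.2 hu1)
    have t3 : 0 ≤ (-A)*(u-u1)*(u2-u)*(u2-u1) := by
      apply mul_nonneg; apply mul_nonneg; apply mul_nonneg
      · linarith
      · linarith
      · linarith
      · linarith
    have key : (A*u^2+B*u+C)*(u2-u1)
        = (A*u1^2+B*u1+C)*(u2-u) + (A*u2^2+B*u2+C)*(u-u1)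
          + (-A)*(u-u1)*(u2-u)*(u2-u1) := by ring
    by_contra hcon
    push_neg at hcon
    nlinarith [key, t1, t2, t3, hlt]

set_option maxHeartbeats 1000000 in
lemma lemC {a b c : ℝ} (ha0 : 0 ≤ a) (ha1 : a ≤ 1) (hb0 : 0 ≤ b) (hb1 : b ≤ 1)
    (hc0 : 0 ≤ c) (hc1 : c ≤ 1) (h : a + b + c = 2) :
    Real.pi ≤ Real.arccos (a*b) + Real.arccos (b*c) + Real.arccos (c*a) := by
  have hab0 : 0 ≤ a*b := mul_nonneg ha0 hb0
  have hab1 : a*b ≤ 1 := mul_le_one₀ ha1 hb0 hb1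
  have hbc0 : 0 ≤ b*c := mul_nonneg hb0 hc0
  have hbc1 : b*c ≤ 1 := mul_le_one₀ hb1 hc0 hc1
  have hca0 : 0 ≤ c*a := mul_nonneg hc0 ha0
  have hca1 : c*a ≤ 1 := mul_le_one₀ hc1 ha0 ha1
  set A := Real.arccos (b*c) with hA
  set B := Real.arccos (c*a) with hB
  have hA0 : 0 ≤ A := Real.arccos_nonneg _
  have hB0 : 0 ≤ B := Real.arccos_nonneg _
  have hApi : A ≤ Real.pi := Real.arccos_le_pi _
  have hBpi : B ≤ Real.pi := Real.arccos_le_pi _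
  rcases le_or_gt (Real.pi - A - B) 0 with h' | h'
  · have := Real.arccos_nonneg (a*b); linarith
  · -- main case
    have hcosA : Real.cos A = b*c := Real.cos_arccos (by linarith) hbc1
    have hcosB : Real.cos B = c*a := Real.cos_arccos (by linarith) hca1
    have hsinA : Real.sin A = Real.sqrt (1 - (b*c)^2) := Real.sin_arccos _
    have hsinB : Real.sin B = Real.sqrt (1 - (c*a)^2) := Real.sin_arccos _
    have hkey : a*b ≤ Real.cos (Real.pi - A - B) := by
      have hexp : Real.cos (Real.pi - A - B)
          = Real.sin A * Real.sin B - Real.cos A * Real.cos B := by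
        rw [show Real.pi - A - B = Real.pi - (A + B) by ring, Real.cos_pi_sub,
          Real.cos_add]
        ring
      rw [hexp, hcosA, hcosB, hsinA, hsinB]
      rw [← Real.sqrt_mul (by nlinarith)]
      have hpoly : (a*b + b*c*(c*a))^2 ≤ (1 - (b*c)^2) * (1 - (c*a)^2) := by
        have hA : (-(1+2*c^2)) ≤ 0 := by nlinarith [sq_nonneg c]
        have h1 : 0 ≤ (-(1+2*c^2))*(1-c)^2 + (2*c^2)*(1-c) + (1-(2-c)^2*c^2) := by
          have he : (-(1+2*c^2))*(1-c)^2 + (2*c^2)*(1-c) + (1-(2-c)^2*c^2)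
              = c*(1-c)*(3*c^2-3*c+2) := by ring
          rw [he]
          apply mul_nonneg (mul_nonneg hc0 (by linarith))
          nlinarith [sq_nonneg (2*c-1)]
        have h2 : 0 ≤ (-(1+2*c^2))*((2-c)^2/4)^2 + (2*c^2)*((2-c)^2/4) + (1-(2-c)^2*c^2) := by
          have he : (-(1+2*c^2))*((2-c)^2/4)^2 + (2*c^2)*((2-c)^2/4) + (1-(2-c)^2*c^2)
              = c*(32 - 88*c + 104*c^2 - 57*c^3 + 16*c^4 - 2*c^5)/16 := by ring
          rw [he]
          apply div_nonneg _ (by norm_num)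
          apply mul_nonneg hc0
          nlinarith [sq_nonneg (c-1), sq_nonneg c,
            mul_nonneg hc0 (by linarith : (0:ℝ) ≤ 1 - c), sq_nonneg (c*(1-c)),
            sq_nonneg (1-c), mul_nonneg (mul_nonneg hc0 hc0) hc0]
        have hu1 : 1 - c ≤ a*b := by
          have he : a*b - (1-c) = (1-a)*(1-b) := by linear_combination h
          linarith [mul_nonneg (sub_nonneg.2 ha1) (sub_nonneg.2 hb1), he]
        have hu2 : a*b ≤ (2-c)^2/4 := by
          have he : (2-c)^2/4 - a*b = (a-b)^2/4 := by
            linear_combination (-(a+b-c+2)/4) * h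
          linarith [sq_nonneg (a-b), he]
        have hq := quad_nonneg hA h1 h2 hu1 hu2
        have hfin : (1 - (b*c)^2) * (1 - (c*a)^2) - (a*b + b*c*(c*a))^2
            = (-(1+2*c^2))*(a*b)^2 + (2*c^2)*(a*b) + (1-(2-c)^2*c^2) := by
          linear_combination (-(c^2)*(a+b-c+2))*h
        linarith [hq, hfin]
      have := (Real.le_sqrt (by positivity) (by linarith [sq_nonneg (a*b + b*c*(c*a))])).mpr hpoly
      linarith
    have harg : Real.pi - A - B ≤ Real.pi := by linarith
    have : Real.pi - A - B ≤ Real.arccos (a*b) := by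
      rw [← Real.arccos_cos h'.le harg]
      rcases eq_or_lt_of_le hkey with he | hl
      · rw [he]
      · exact le_of_lt (Real.strictAntiOn_arccos
          ⟨by linarith, hab1⟩
          ⟨Real.neg_one_le_cos _, Real.cos_le_one _⟩ hl)
    linarith

lemma mod_inj {m p k l : ℕ} (hk : k < m) (hl : l < m) (h : (p+k) % m = (p+l) % m) : k = l := by
  have h' : (p+k) ≡ (p+l) [MOD m] := h
  have h2 : k ≡ l [MOD m] := Nat.ModEq.add_left_cancel' p h'
  rwa [Nat.ModEq, Nat.mod_eq_of_lt hk, Nat.mod_eq_of_lt hl] at h2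

lemma mod_pred {m p e : ℕ} (hm : 0 < m) (he : e < m) (h : (e+1) % m = p) :
    e = (p + (m-1)) % m := by
  have h1 := Nat.mod_add_mod (e+1) m (m-1)
  rw [h] at h1
  have h2 : e + 1 + (m-1) = e + m := by omega
  rw [h2, Nat.add_mod_right, Nat.mod_eq_of_lt he] at h1
  exact h1.symm

lemma exists_nonone {m : ℕ} (hm : 0 < m) {x : ℕ → ℝ}
    (hsum : ∑ e ∈ Finset.range m, x e = (m:ℝ) - 1) :
    ∃ p ∈ Finset.range m, x p ≠ 1 := by
  by_contra hcon
  push_neg at hcon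
  rw [Finset.sum_congr rfl hcon] at hsum
  simp only [Finset.sum_const, Finset.card_range, nsmul_eq_mul, mul_one] at hsum
  linarith

lemma terminal_case {m : ℕ} (hm : 3 ≤ m) {x : ℕ → ℝ}
    (h0 : ∀ e, 0 ≤ x e) (h1 : ∀ e, x e ≤ 1)
    (hsum : ∑ e ∈ Finset.range m, x e = (m:ℝ) - 1)
    {P : ℕ} (hP : P < m)
    (hother : ∀ e < m, e ≠ P → e ≠ (P+1) % m → x e = 1) :
    Real.pi ≤ ∑ e ∈ Finset.range m, Real.arccos (x e * x ((e+1) % m)) := by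
  have hm0 : 0 < m := by omega
  set Q := (P+1) % m with hQ
  set R := (P+(m-1)) % m with hR
  have hQm : Q < m := Nat.mod_lt _ hm0
  have hRm : R < m := Nat.mod_lt _ hm0
  have hQP : (P + 1) % m = (P + 1) % m := rfl
  have hP0 : P = (P + 0) % m := by rw [Nat.add_zero, Nat.mod_eq_of_lt hP]
  have hPQ : P ≠ Q := by
    intro h; rw [hQ] at h; nth_rewrite 1 [hP0] at h
    have := mod_inj (by omega) (by omega) h; omega
  have hPR : P ≠ R := by
    intro h; rw [hR] at h; nth_rewrite 1 [hP0] at h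
    have := mod_inj (by omega) (by omega) h; omega
  have hQR : Q ≠ R := by
    intro h; rw [hQ, hR] at h
    have := mod_inj (by omega) (by omega) h; omega
  have hR1 : (R+1) % m = P := by
    rw [hR, Nat.mod_add_mod]
    have : P + (m-1) + 1 = P + m := by omega
    rw [this, Nat.add_mod_right, Nat.mod_eq_of_lt hP]
  have hQ1 : (Q+1) % m = (P+2) % m := by rw [hQ, Nat.mod_add_mod]
  have hQ1P : (Q+1) % m ≠ P := by
    rw [hQ1]; intro h; nth_rewrite 2 [hP0] at h
    have := mod_inj (by omega) (by omega) h; omega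
  have hQ1Q : (Q+1) % m ≠ Q := by
    rw [hQ1, hQ]; intro h
    have := mod_inj (by omega) (by omega) h; omega
  have hxR : x R = 1 := hother R hRm (Ne.symm hPR) (Ne.symm hQR)
  have hxQ1 : x ((Q+1) % m) = 1 := hother _ (Nat.mod_lt _ hm0) hQ1P hQ1Q
  -- x P + x Q = 1
  have hPQsum : x P + x Q = 1 := by
    have hsub : ({P, Q} : Finset ℕ) ⊆ Finset.range m := by
      intro e he
      simp only [Finset.mem_insert, Finset.mem_singleton] at he
      rcases he with h | h <;> subst h <;> simp [Finset.mem_range, hP, hQm]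
    have h2 : ∑ e ∈ ({P, Q} : Finset ℕ), (x e - 1) = ∑ e ∈ Finset.range m, (x e - 1) := by
      apply Finset.sum_subset hsub
      intro e he hne
      simp only [Finset.mem_insert, Finset.mem_singleton, not_or] at hne
      rw [hother e (Finset.mem_range.mp he) hne.1 hne.2]
      ring
    rw [Finset.sum_pair hPQ] at h2
    have hone : ∑ _e ∈ Finset.range m, (1:ℝ) = m := by simp
    have h3 : ∑ e ∈ Finset.range m, (x e - 1) = -1 := by
      rw [Finset.sum_sub_distrib, hsum, hone]; ring
    rw [h3] at h2
    linarith
  -- three-term bound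
  have hsubset : ({R, P, Q} : Finset ℕ) ⊆ Finset.range m := by
    intro e he
    simp only [Finset.mem_insert, Finset.mem_singleton] at he
    rcases he with h | h | h <;> subst h <;> simp [Finset.mem_range, hP, hQm, hRm]
  have hbound := Finset.sum_le_sum_of_subset_of_nonneg hsubset
    (f := fun e => Real.arccos (x e * x ((e+1) % m)))
    (fun e _ _ => Real.arccos_nonneg _)
  have hRnotin : R ∉ ({P, Q} : Finset ℕ) := by
    simp only [Finset.mem_insert, Finset.mem_singleton]
    push_neg
    exact ⟨Ne.symm hPR, Ne.symm hQR⟩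
  have hPnotin : P ∉ ({Q} : Finset ℕ) := by simp [hPQ]
  have hsum3 : ∑ e ∈ ({R, P, Q} : Finset ℕ), Real.arccos (x e * x ((e+1) % m))
      = Real.arccos (x R * x ((R+1) % m)) + (Real.arccos (x P * x ((P+1) % m))
        + Real.arccos (x Q * x ((Q+1) % m))) := by
    rw [Finset.sum_insert hRnotin, Finset.sum_insert hPnotin, Finset.sum_singleton]
  rw [hxR, hR1, ← hQ, hxQ1] at hsum3
  have hC := lemC (a := 1) (b := x P) (c := x Q) (by norm_num) (by norm_num)
    (h0 P) (h1 P) (h0 Q) (h1 Q) (by linarith)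
  linarith [hbound, hsum3, hC]

lemma endpoint_step {m : ℕ} (hm : 3 ≤ m) {k : ℕ}
    (ih : ∀ (x : ℕ → ℝ), (∀ e, 0 ≤ x e) → (∀ e, x e ≤ 1) →
      (∑ e ∈ Finset.range m, x e = (m:ℝ) - 1) →
      ((Finset.range m).filter (fun e => x e ≠ 1)).card ≤ k →
      Real.pi ≤ ∑ e ∈ Finset.range m, Real.arccos (x e * x ((e+1) % m)))
    {x : ℕ → ℝ} (h0 : ∀ e, 0 ≤ x e) (h1 : ∀ e, x e ≤ 1)
    (hsum : ∑ e ∈ Finset.range m, x e = (m:ℝ) - 1)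
    (hcard : ((Finset.range m).filter (fun e => x e ≠ 1)).card ≤ k + 1)
    {i j : ℕ} (hi : i < m) (hj : j < m)
    (hxi : x i ≠ 1) (hxj : x j ≠ 1) (hij : i ≠ j)
    (z : ℕ → ℝ)
    (hzdef : ∀ e, z e = x e + ((if e = i then (1:ℝ) else 0) + (if e = j then (-1:ℝ) else 0))
      * min (1 - x i) (x j)) :
    Real.pi ≤ ∑ e ∈ Finset.range m, Real.arccos (z e * z ((e+1) % m)) := by
  have hm0 : 0 < m := by omega
  set t := min (1 - x i) (x j) with ht
  have hxi' : x i < 1 := (h1 i).lt_of_ne hxi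
  have hxj' : x j < 1 := (h1 j).lt_of_ne hxj
  have ht0 : 0 ≤ t := le_min (by linarith) (h0 j)
  have ht1 : t ≤ 1 - x i := min_le_left _ _
  have ht2 : t ≤ x j := min_le_right _ _
  have hzi : z i = x i + t := by rw [hzdef i]; simp [hij]
  have hzj : z j = x j - t := by rw [hzdef j]; simp [Ne.symm hij]; ring
  have hzo : ∀ e, e ≠ i → e ≠ j → z e = x e := by
    intro e he1 he2; rw [hzdef e]; simp [he1, he2]
  have h0' : ∀ e, 0 ≤ z e := by
    intro e
    by_cases he1 : e = i
    · subst he1; rw [hzi]; linarith [h0 e]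
    · by_cases he2 : e = j
      · subst he2; rw [hzj]; linarith
      · rw [hzo e he1 he2]; exact h0 e
  have h1' : ∀ e, z e ≤ 1 := by
    intro e
    by_cases he1 : e = i
    · subst he1; rw [hzi]; linarith
    · by_cases he2 : e = j
      · subst he2; rw [hzj]; linarith [h1 e]
      · rw [hzo e he1 he2]; exact h1 e
  have hionem : i ∈ Finset.range m := Finset.mem_range.mpr hi
  have hjonem : j ∈ Finset.range m := Finset.mem_range.mpr hj
  have hsum' : ∑ e ∈ Finset.range m, z e = (m:ℝ) - 1 := by
    have hs1 : ∑ e ∈ Finset.range m, z e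
        = ∑ e ∈ Finset.range m, x e
          + (∑ e ∈ Finset.range m, (((if e = i then (1:ℝ) else 0)
            + (if e = j then (-1:ℝ) else 0)))) * t := by
      rw [Finset.sum_mul, ← Finset.sum_add_distrib]
      exact Finset.sum_congr rfl (fun e _ => hzdef e)
    have hs2 : ∑ e ∈ Finset.range m, ((if e = i then (1:ℝ) else 0)
        + (if e = j then (-1:ℝ) else 0)) = 0 := by
      rw [Finset.sum_add_distrib, Finset.sum_ite_eq' (Finset.range m) i (fun _ => (1:ℝ)),
        Finset.sum_ite_eq' (Finset.range m) j (fun _ => (-1:ℝ))]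
      simp [hionem, hjonem]
    rw [hs1, hs2, hsum]; ring
  have hcard' : ((Finset.range m).filter (fun e => z e ≠ 1)).card ≤ k := by
    rcases le_total (1 - x i) (x j) with hc | hc
    · -- t = 1 - x i, z i = 1
      have hti : t = 1 - x i := min_eq_left hc
      have hsub : (Finset.range m).filter (fun e => z e ≠ 1)
          ⊆ ((Finset.range m).filter (fun e => x e ≠ 1)).erase i := by
        intro e he
        rw [Finset.mem_filter] at he
        obtain ⟨hem, hez⟩ := he
        have hei : e ≠ i := by
          intro h; subst h; apply hez; rw [hzi, hti]; ring
        rw [Finset.mem_erase, Finset.mem_filter]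
        refine ⟨hei, hem, ?_⟩
        by_cases hej : e = j
        · subst hej; exact hxj
        · rw [hzo e hei hej] at hez; exact hez
      have hmem : i ∈ (Finset.range m).filter (fun e => x e ≠ 1) :=
        Finset.mem_filter.mpr ⟨hionem, hxi⟩
      have := Finset.card_le_card hsub
      rw [Finset.card_erase_of_mem hmem] at this
      omega
    · -- t = x j, z j = 0
      have htj : t = x j := min_eq_right hc
      have hzj0 : z j = 0 := by rw [hzj, htj]; ring
      have herase : ∑ e ∈ (Finset.range m).erase j, z e = (m:ℝ) - 1 := by
        rw [← Finset.add_sum_erase _ _ hjonem] at hsum'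
        rw [hzj0] at hsum'; linarith
      have hall : ∀ e ∈ (Finset.range m).erase j, z e = 1 := by
        by_contra hcon
        push_neg at hcon
        obtain ⟨e0, he0, hne0⟩ := hcon
        have hlt : ∑ e ∈ (Finset.range m).erase j, z e
            < ∑ _e ∈ (Finset.range m).erase j, (1:ℝ) :=
          Finset.sum_lt_sum (fun e _ => h1' e) ⟨e0, he0, (h1' e0).lt_of_ne hne0⟩
        rw [herase] at hlt
        rw [Finset.sum_const, Finset.card_erase_of_mem hjonem, Finset.card_range] at hlt
        simp only [nsmul_eq_mul, mul_one] at hlt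
        rw [Nat.cast_sub (by omega)] at hlt
        simp at hlt
      have hsub : (Finset.range m).filter (fun e => z e ≠ 1) ⊆ {j} := by
        intro e he
        rw [Finset.mem_filter] at he
        obtain ⟨hem, hez⟩ := he
        rw [Finset.mem_singleton]
        by_contra hej
        exact hez (hall e (Finset.mem_erase.mpr ⟨hej, hem⟩))
      have hk1 : 1 ≤ k := by
        have hsub2 : ({i, j} : Finset ℕ) ⊆ (Finset.range m).filter (fun e => x e ≠ 1) := by
          intro e he
          simp only [Finset.mem_insert, Finset.mem_singleton] at he
          rcases he with h | h <;> subst h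
          · exact Finset.mem_filter.mpr ⟨hionem, hxi⟩
          · exact Finset.mem_filter.mpr ⟨hjonem, hxj⟩
        have := Finset.card_le_card hsub2
        rw [Finset.card_pair hij] at this
        omega
      have := Finset.card_le_card hsub
      simp only [Finset.card_singleton] at this
      omega
  exact ih z h0' h1' hsum' hcard'

lemma main_lemma (m : ℕ) (hm : 3 ≤ m) :
    ∀ (k : ℕ) (x : ℕ → ℝ), (∀ e, 0 ≤ x e) → (∀ e, x e ≤ 1) →
      (∑ e ∈ Finset.range m, x e = (m:ℝ) - 1) →
      ((Finset.range m).filter (fun e => x e ≠ 1)).card ≤ k →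
      Real.pi ≤ ∑ e ∈ Finset.range m, Real.arccos (x e * x ((e+1) % m)) := by
  have hm0 : 0 < m := by omega
  intro k
  induction k with
  | zero =>
    intro x h0 h1 hsum hcard
    exfalso
    obtain ⟨p, hp, hxp⟩ := exists_nonone hm0 hsum
    have hmem : p ∈ (Finset.range m).filter (fun e => x e ≠ 1) :=
      Finset.mem_filter.mpr ⟨hp, hxp⟩
    have := Finset.card_pos.mpr ⟨p, hmem⟩
    omega
  | succ k ih =>
    intro x h0 h1 hsum hcard
    by_cases hna : ∃ i, i < m ∧ ∃ j, j < m ∧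
        x i ≠ 1 ∧ x j ≠ 1 ∧ i ≠ j ∧ (i+1) % m ≠ j ∧ (j+1) % m ≠ i
    · -- smoothing case
      obtain ⟨i, hi, j, hj, hxi, hxj, hij, hadj1, hadj2⟩ := hna
      have hxi' : x i < 1 := (h1 i).lt_of_ne hxi
      have hxj' : x j < 1 := (h1 j).lt_of_ne hxj
      set d : ℕ → ℝ := fun e => (if e = i then (1:ℝ) else 0) + (if e = j then (-1:ℝ) else 0)
        with hd
      set t1 := min (x i) (1 - x j) with ht1
      set t2 := min (1 - x i) (x j) with ht2
      have ht10 : 0 ≤ t1 := le_min (h0 i) (by linarith)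
      have ht20 : 0 ≤ t2 := le_min (by linarith) (h0 j)
      have hIconv : Convex ℝ (Set.Icc (-t1) t2) := convex_Icc _ _
      have hmem : ∀ e, ∀ s ∈ Set.Icc (-t1) t2, x e + d e * s ∈ Set.Icc (0:ℝ) 1 := by
        intro e s hs
        obtain ⟨hs1, hs2⟩ := hs
        by_cases he1 : e = i
        · subst he1
          have hde : d e = 1 := by simp [hd, hij]
          rw [hde, one_mul]
          have ha : t1 ≤ x e := min_le_left _ _
          have hb : t2 ≤ 1 - x e := min_le_left _ _
          exact ⟨by linarith, by linarith⟩
        · by_cases he2 : e = j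
          · subst he2
            have hde : d e = -1 := by simp [hd, Ne.symm hij]
            rw [hde]
            have ha : t2 ≤ x e := min_le_right _ _
            have hb : t1 ≤ 1 - x e := min_le_right _ _
            constructor
            · nlinarith
            · nlinarith
          · have hde : d e = 0 := by simp [hd, he1, he2]
            rw [hde, zero_mul, add_zero]
            exact ⟨h0 e, h1 e⟩
      have hconc : ConcaveOn ℝ (Set.Icc (-t1) t2)
          (fun s => ∑ e ∈ Finset.range m,
            Real.arccos ((x e + d e * s) * (x ((e+1) % m) + d ((e+1) % m) * s))) := by
        apply concaveOn_finset_sum _ hIconv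
        intro e he
        have hem : e < m := Finset.mem_range.mp he
        have hfe : (e+1) % m ≠ e := by
          intro h
          nth_rewrite 2 [show e = (e+0) % m by rw [Nat.add_zero, Nat.mod_eq_of_lt hem]] at h
          have := mod_inj (by omega) (by omega) h
          omega
        have hs : d e = 0 ∨ d ((e+1) % m) = 0 := by
          by_cases he1 : e = i
          · right
            have hfj : (e+1) % m ≠ j := by rw [he1]; exact hadj1
            have hfi : (e+1) % m ≠ i := by rw [← he1]; exact hfe
            simp [hd, hfj, hfi]
          · by_cases he2 : e = j
            · right
              have hfi : (e+1) % m ≠ i := by rw [he2]; exact hadj2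
              have hfj : (e+1) % m ≠ j := by rw [← he2]; exact hfe
              simp [hd, hfj, hfi]
            · left; simp [hd, he1, he2]
        exact concave_edge hIconv hs (hmem e) (hmem ((e+1) % m))
      have hmin := concave_min_le (neg_nonpos.mpr ht10) ht20 hconc
      have hend2 : Real.pi ≤ ∑ e ∈ Finset.range m,
          Real.arccos ((x e + d e * t2) * (x ((e+1) % m) + d ((e+1) % m) * t2)) := by
        exact endpoint_step hm ih h0 h1 hsum hcard hi hj hxi hxj hij
          (fun e => x e + d e * t2) (fun e => by rw [← ht2])
      have hend1 : Real.pi ≤ ∑ e ∈ Finset.range m,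
          Real.arccos ((x e + d e * (-t1)) * (x ((e+1) % m) + d ((e+1) % m) * (-t1))) := by
        apply endpoint_step hm ih h0 h1 hsum hcard hj hi hxj hxi (Ne.symm hij)
          (fun e => x e + d e * (-t1))
        intro e
        have hmc : min (1 - x j) (x i) = t1 := by rw [ht1, min_comm]
        rw [hmc]
        have hneg : ((if e = j then (1:ℝ) else 0) + (if e = i then (-1:ℝ) else 0)) = -(d e) := by
          by_cases he1 : e = i <;> by_cases he2 : e = j <;>
            simp [hd, he1, he2, hij, Ne.symm hij]
        rw [hneg]
        ring
      have hfin := le_trans (le_min hend1 hend2) hmin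
      simp only [mul_zero, add_zero] at hfin
      exact hfin
    · -- terminal case
      push_neg at hna
      obtain ⟨p, hpmem, hxp⟩ := exists_nonone hm0 hsum
      have hp : p < m := Finset.mem_range.mp hpmem
      have hp0 : p = (p + 0) % m := by rw [Nat.add_zero, Nat.mod_eq_of_lt hp]
      rcases eq_or_lt_of_le hm with hm3 | hm4
      · -- m = 3
        subst hm3
        rw [Finset.sum_range_succ, Finset.sum_range_succ, Finset.sum_range_one]
        norm_num
        have hsum3 : x 0 + x 1 + x 2 = 2 := by
          rw [Finset.sum_range_succ, Finset.sum_range_succ, Finset.sum_range_one] at hsum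
          norm_num at hsum
          linarith
        exact lemC (h0 0) (h1 0) (h0 1) (h1 1) (h0 2) (h1 2) hsum3
      · -- m ≥ 4
        set P1 := (p + 1) % m with hP1
        set Pm := (p + (m-1)) % m with hPm
        have hP1m : P1 < m := Nat.mod_lt _ hm0
        have hPmm : Pm < m := Nat.mod_lt _ hm0
        have hclass : ∀ e, e < m → x e ≠ 1 → e = p ∨ e = P1 ∨ e = Pm := by
          intro e hem hxe
          by_cases h1' : p = e
          · exact Or.inl h1'.symm
          · by_cases h2' : (p+1) % m = e
            · exact Or.inr (Or.inl (by rw [hP1, h2']))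
            · have h3' := hna p hp e hem hxp hxe h1' h2'
              exact Or.inr (Or.inr (by rw [hPm]; exact mod_pred hm0 hem h3'))
        have hnotboth : ¬ (x P1 ≠ 1 ∧ x Pm ≠ 1) := by
          rintro ⟨hb1, hbm'⟩
          have hne1 : P1 ≠ Pm := by
            rw [hP1, hPm]; intro h
            have := mod_inj (by omega) (by omega) h; omega
          have hne2 : (P1 + 1) % m ≠ Pm := by
            rw [hP1, hPm, Nat.mod_add_mod, show p+1+1 = p+2 by omega]
            intro h
            have := mod_inj (by omega) (by omega) h; omega
          have hlast := hna P1 hP1m Pm hPmm hb1 hbm' hne1 hne2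
          rw [hPm, hP1, Nat.mod_add_mod, show p+(m-1)+1 = p+m by omega,
            Nat.add_mod_right] at hlast
          rw [Nat.mod_eq_of_lt hp] at hlast
          nth_rewrite 1 [hp0] at hlast
          have := mod_inj (by omega) (by omega) hlast; omega
        by_cases hbm : x Pm ≠ 1
        · -- use P := Pm
          have hQ : (Pm + 1) % m = p := by
            rw [hPm, Nat.mod_add_mod, show p+(m-1)+1 = p+m by omega,
              Nat.add_mod_right, Nat.mod_eq_of_lt hp]
          apply terminal_case hm h0 h1 hsum hPmm
          intro e hem he1 he2
          by_contra hxe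
          rcases hclass e hem hxe with h | h | h
          · exact he2 (h.trans hQ.symm)
          · exact hnotboth ⟨h ▸ hxe, hbm⟩
          · exact he1 h
        · push_neg at hbm
          apply terminal_case hm h0 h1 hsum hp
          intro e hem he1 he2
          by_contra hxe
          rcases hclass e hem hxe with h | h | h
          · exact he1 h
          · exact he2 (h.trans hP1)
          · rw [h] at hxe; exact hxe hbm

/-- Theorem (optimization inequality): if `m ≥ 3`, `0 ≤ x i ≤ 1`,
`x` is `m`-periodic (cyclic indices) and `∑_{i<m} x i = m - 1`, then
`∑_{i<m} arccos (x i * x (i+1)) ≥ π`. -/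
theorem stmt0 (m : ℕ) (hm : 3 ≤ m) (x : ℕ → ℝ)
    (hper : ∀ i, x (i + m) = x i)
    (h0 : ∀ i, 0 ≤ x i) (h1 : ∀ i, x i ≤ 1)
    (hsum : ∑ i ∈ Finset.range m, x i = m - 1) :
    Real.pi ≤ ∑ i ∈ Finset.range m, Real.arccos (x i * x (i + 1)) := by
  have hmain := main_lemma m hm m x h0 h1 hsum
    (le_trans (Finset.card_filter_le _ _) (by simp))
  have heq : ∑ i ∈ Finset.range m, Real.arccos (x i * x ((i+1) % m))
      = ∑ i ∈ Finset.range m, Real.arccos (x i * x (i + 1)) := by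
    apply Finset.sum_congr rfl
    intro e he
    have hem : e < m := Finset.mem_range.mp he
    rcases lt_or_eq_of_le (Nat.succ_le_of_lt hem) with h | h
    · rw [Nat.mod_eq_of_lt h]
    · have h' : e + 1 = m := h
      rw [h', Nat.mod_self, ← hper 0, Nat.zero_add]
  rw [← heq]
  exact hmain
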